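/- Let A : ℝ^m → ℝ^{n×p} and b : ℝ^m → ℝ^n be Lipschitz linear maps with ‖A(u)‖_op ≤ W for all u in a compact set U, and let f : ℝ^p → ℝ^n be C¹ with L_f-Lipschitz derivative and bounded derivative ‖Df‖ ≤ D on a bounded set X ⊆ ℝ^p. Define Λ(x,u) = f(A(u)x + b(u)). Then there is a constant C such that for all x,y ∈ X and u,v ∈ U: ‖∂_x Λ(x,u) − ∂_x Λ(y,v)‖_op ≤ C(W²‖x−y‖ + W‖y‖‖u−v‖ + ‖u−v‖). -/

import Mathlib

private lemma stmt_18_aux1 (lf ka kb aw ad : ℝ) (h1 : 0 ≤ lf) (h2 : 0 ≤ ka)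
    (h3 : 0 ≤ kb) (h4 : 0 ≤ aw) (h5 : 0 ≤ ad) :
    lf ≤ lf + lf * ka + lf * kb * aw + ad * ka + 1 := by
  nlinarith [mul_nonneg h1 h2, mul_nonneg (mul_nonneg h1 h3) h4, mul_nonneg h5 h2]

private lemma stmt_18_aux2 (lf ka kb aw ad : ℝ) (h1 : 0 ≤ lf) (h2 : 0 ≤ ka)
    (h3 : 0 ≤ kb) (h4 : 0 ≤ aw) (h5 : 0 ≤ ad) :
    lf * ka ≤ lf + lf * ka + lf * kb * aw + ad * ka + 1 := by
  nlinarith [mul_nonneg (mul_nonneg h1 h3) h4, mul_nonneg h5 h2]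

private lemma stmt_18_aux3 (lf ka kb w d aw ad : ℝ) (hw : w ≤ aw) (hd : d ≤ ad)
    (h1 : 0 ≤ lf) (h2 : 0 ≤ ka) (h3 : 0 ≤ kb) (h4 : 0 ≤ ad) :
    lf * kb * w + d * ka ≤ lf + lf * ka + lf * kb * aw + ad * ka + 1 := by
  have e1 : lf * kb * w ≤ lf * kb * aw := mul_le_mul_of_nonneg_left hw (mul_nonneg h1 h3)
  have e2 : d * ka ≤ ad * ka := mul_le_mul_of_nonneg_right hd h2
  nlinarith [mul_nonneg h1 h2]

/-- Joint Lipschitz continuity of the state-Jacobian of a CNN layer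
`Λ(x,u) = f(A(u)x + b(u))`: for `A`, `b` Lipschitz, `‖A(u)‖ ≤ W` on `U`, and
`f ∈ C¹` with Lipschitz derivative bounded by `D` at the relevant points, there is
a constant `C` with
`‖∂_x Λ(x,u) − ∂_x Λ(y,v)‖ ≤ C (W²‖x−y‖ + W‖y‖‖u−v‖ + ‖u−v‖)` on `X × U`. -/
theorem stmt_18 (m p : ℕ)
    (A : EuclideanSpace ℝ (Fin m) →
      (EuclideanSpace ℝ (Fin p) →L[ℝ] EuclideanSpace ℝ (Fin p)))
    (b : EuclideanSpace ℝ (Fin m) → EuclideanSpace ℝ (Fin p))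
    (f : EuclideanSpace ℝ (Fin p) → EuclideanSpace ℝ (Fin p))
    (U : Set (EuclideanSpace ℝ (Fin m))) (hU : IsCompact U)
    (X : Set (EuclideanSpace ℝ (Fin p))) (hX : Bornology.IsBounded X)
    (KA Kb Lf : NNReal) (W D : ℝ)
    (hA : LipschitzWith KA A) (hb : LipschitzWith Kb b)
    (hW : ∀ u ∈ U, ‖A u‖ ≤ W)
    (hfC1 : ContDiff ℝ 1 f)
    (hLf : LipschitzWith Lf (fderiv ℝ f))
    (hD : ∀ u ∈ U, ∀ x ∈ X, ‖fderiv ℝ f (A u x + b u)‖ ≤ D) :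
    ∃ C > (0 : ℝ), ∀ x ∈ X, ∀ y ∈ X, ∀ u ∈ U, ∀ v ∈ U,
      ‖fderiv ℝ (fun z => f (A u z + b u)) x -
        fderiv ℝ (fun z => f (A v z + b v)) y‖
        ≤ C * (W ^ 2 * ‖x - y‖ + W * ‖y‖ * ‖u - v‖ + ‖u - v‖) := by
  refine ⟨(Lf : ℝ) + Lf * KA + Lf * Kb * |W| + |D| * KA + 1, by positivity, ?_⟩
  intro x hx y hy u hu v hv
  have hfd := hfC1.differentiable one_ne_zero
  have key : ∀ w z, fderiv ℝ (fun z => f (A w z + b w)) z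
      = (fderiv ℝ f (A w z + b w)).comp (A w) := by
    intro w z
    have h1 : HasFDerivAt (fun z => A w z + b w) (A w) z :=
      ((A w).hasFDerivAt).add_const _
    exact ((hfd _).hasFDerivAt.comp z h1).fderiv
  rw [key, key]
  set Dx := fderiv ℝ f (A u x + b u) with hDx
  set Dy := fderiv ℝ f (A v y + b v) with hDyd
  have hsplit : Dx.comp (A u) - Dy.comp (A v)
      = (Dx - Dy).comp (A u) + Dy.comp (A u - A v) := by
    ext z
    simp [ContinuousLinearMap.comp_apply, map_sub]
  rw [hsplit]
  have hWu : ‖A u‖ ≤ W := hW u hu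
  have hW0 : (0 : ℝ) ≤ W := le_trans (norm_nonneg _) hWu
  have hDy : ‖Dy‖ ≤ D := hD v hv y hy
  have hD0 : (0 : ℝ) ≤ D := le_trans (norm_nonneg _) hDy
  have hAuv : ‖A u - A v‖ ≤ (KA : ℝ) * ‖u - v‖ := by
    have := hA.dist_le_mul u v
    rwa [dist_eq_norm, dist_eq_norm] at this
  have hbuv : ‖b u - b v‖ ≤ (Kb : ℝ) * ‖u - v‖ := by
    have := hb.dist_le_mul u v
    rwa [dist_eq_norm, dist_eq_norm] at this
  have hDxy : ‖Dx - Dy‖ ≤ (Lf : ℝ) * ‖(A u x + b u) - (A v y + b v)‖ := by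
    have := hLf.dist_le_mul (A u x + b u) (A v y + b v)
    rwa [dist_eq_norm, dist_eq_norm] at this
  have hpt : ‖(A u x + b u) - (A v y + b v)‖
      ≤ W * ‖x - y‖ + (KA : ℝ) * ‖u - v‖ * ‖y‖ + (Kb : ℝ) * ‖u - v‖ := by
    have heq : (A u x + b u) - (A v y + b v)
        = A u (x - y) + (A u - A v) y + (b u - b v) := by
      simp [map_sub]
      abel
    rw [heq]
    have h1 : ‖A u (x - y)‖ ≤ W * ‖x - y‖ :=
      le_trans ((A u).le_opNorm _) (by
        exact mul_le_mul_of_nonneg_right hWu (norm_nonneg _))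
    have h2 : ‖(A u - A v) y‖ ≤ (KA : ℝ) * ‖u - v‖ * ‖y‖ :=
      le_trans ((A u - A v).le_opNorm _)
        (mul_le_mul_of_nonneg_right hAuv (norm_nonneg _))
    calc ‖A u (x - y) + (A u - A v) y + (b u - b v)‖
        ≤ ‖A u (x - y) + (A u - A v) y‖ + ‖b u - b v‖ := norm_add_le _ _
      _ ≤ ‖A u (x - y)‖ + ‖(A u - A v) y‖ + ‖b u - b v‖ := by
          have := norm_add_le (A u (x - y)) ((A u - A v) y)
          linarith
      _ ≤ _ := by linarith
  have hmain : ‖(Dx - Dy).comp (A u) + Dy.comp (A u - A v)‖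
      ≤ ‖Dx - Dy‖ * ‖A u‖ + ‖Dy‖ * ‖A u - A v‖ := by
    calc ‖(Dx - Dy).comp (A u) + Dy.comp (A u - A v)‖
        ≤ ‖(Dx - Dy).comp (A u)‖ + ‖Dy.comp (A u - A v)‖ := norm_add_le _ _
      _ ≤ _ := add_le_add (ContinuousLinearMap.opNorm_comp_le _ _)
          (ContinuousLinearMap.opNorm_comp_le _ _)
  have hA0 : (0 : ℝ) ≤ ‖A u‖ := norm_nonneg _
  have hDy0 : (0 : ℝ) ≤ ‖Dy‖ := norm_nonneg _
  have hxy0 : (0 : ℝ) ≤ ‖x - y‖ := norm_nonneg _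
  have huv0 : (0 : ℝ) ≤ ‖u - v‖ := norm_nonneg _
  have hy0 : (0 : ℝ) ≤ ‖y‖ := norm_nonneg _
  have hKA0 : (0 : ℝ) ≤ (KA : ℝ) := KA.coe_nonneg
  have hKb0 : (0 : ℝ) ≤ (Kb : ℝ) := Kb.coe_nonneg
  have hLf0 : (0 : ℝ) ≤ (Lf : ℝ) := Lf.coe_nonneg
  have hWabs : W ≤ |W| := le_abs_self W
  have hDabs : D ≤ |D| := le_abs_self D
  have hAW : ‖Dx - Dy‖ * ‖A u‖ ≤
      ((Lf : ℝ) * (W * ‖x - y‖ + (KA : ℝ) * ‖u - v‖ * ‖y‖ + (Kb : ℝ) * ‖u - v‖)) * W := by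
    apply mul_le_mul (le_trans hDxy (mul_le_mul_of_nonneg_left hpt hLf0)) hWu hA0
    positivity
  have hDA : ‖Dy‖ * ‖A u - A v‖ ≤ D * ((KA : ℝ) * ‖u - v‖) :=
    mul_le_mul hDy hAuv (norm_nonneg _) hD0
  set s1 := W ^ 2 * ‖x - y‖ with hs1d
  set s2 := W * ‖y‖ * ‖u - v‖ with hs2d
  set s3 := ‖u - v‖ with hs3d
  have hs1 : (0:ℝ) ≤ s1 := by rw [hs1d]; positivity
  have hs2 : (0:ℝ) ≤ s2 := by rw [hs2d]; positivity
  have hs3 : (0:ℝ) ≤ s3 := huv0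
  set C := (Lf : ℝ) + Lf * KA + Lf * Kb * |W| + |D| * KA + 1 with hCd
  have hAW' : (Lf : ℝ) * (W * ‖x - y‖ + (KA : ℝ) * ‖u - v‖ * ‖y‖ + (Kb : ℝ) * ‖u - v‖) * W
      = (Lf : ℝ) * s1 + (Lf : ℝ) * KA * s2 + (Lf : ℝ) * Kb * W * s3 := by
    rw [hs1d, hs2d, hs3d]; ring
  have hB : ‖(Dx - Dy).comp (A u) + Dy.comp (A u - A v)‖
      ≤ (Lf : ℝ) * s1 + (Lf : ℝ) * KA * s2 + (Lf : ℝ) * Kb * W * s3 + D * KA * s3 := by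
    have h := hAW
    rw [hAW'] at h
    have hDA' : ‖Dy‖ * ‖A u - A v‖ ≤ D * KA * s3 := by
      have : D * ((KA : ℝ) * ‖u - v‖) = D * KA * s3 := by rw [hs3d]; ring
      linarith [hDA]
    linarith [hmain, h, hDA']
  have hc1 : (Lf : ℝ) ≤ C := by
    rw [hCd]
    exact stmt_18_aux1 _ _ _ _ _ hLf0 hKA0 hKb0 (abs_nonneg W) (abs_nonneg D)
  have hc2 : (Lf : ℝ) * KA ≤ C := by
    rw [hCd]
    exact stmt_18_aux2 _ _ _ _ _ hLf0 hKA0 hKb0 (abs_nonneg W) (abs_nonneg D)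
  have hc3 : (Lf : ℝ) * Kb * W + D * KA ≤ C := by
    rw [hCd]
    exact stmt_18_aux3 _ _ _ _ _ _ _ hWabs hDabs hLf0 hKA0 hKb0 (abs_nonneg D)
  have t1 : (Lf : ℝ) * s1 ≤ C * s1 := mul_le_mul_of_nonneg_right hc1 hs1
  have t2 : (Lf : ℝ) * KA * s2 ≤ C * s2 := mul_le_mul_of_nonneg_right hc2 hs2
  have t3 : ((Lf : ℝ) * Kb * W + D * KA) * s3 ≤ C * s3 := mul_le_mul_of_nonneg_right hc3 hs3
  calc ‖(Dx - Dy).comp (A u) + Dy.comp (A u - A v)‖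
      ≤ (Lf : ℝ) * s1 + (Lf : ℝ) * KA * s2 + (Lf : ℝ) * Kb * W * s3 + D * KA * s3 := hB
    _ = (Lf : ℝ) * s1 + (Lf : ℝ) * KA * s2 + ((Lf : ℝ) * Kb * W + D * KA) * s3 := by ring
    _ ≤ C * s1 + C * s2 + C * s3 := add_le_add (add_le_add t1 t2) t3
    _ = C * (s1 + s2 + s3) := by ring
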